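/- For any positive integers m1,...,m5, the chromatic number of G = K[C5](m1,...,m5) equals max{omega(G), ceil(|V(G)|/2)}, where omega(G) = max over i (mod 5) of (m_i + m_{i+1}) and |V(G)| = m1+m2+m3+m4+m5. -/

import Mathlib

open SimpleGraph Finset

/-- `G` contains an induced copy of `H`. -/
def HasInducedCopy {V W : Type*} (G : SimpleGraph V) (H : SimpleGraph W) : Prop :=
  ∃ f : W ↪ V, ∀ a b, G.Adj (f a) (f b) ↔ H.Adj a b

/-- The cycle on `ZMod n` (for `n ≥ 3`). -/
def cyc (n : ℕ) : SimpleGraph (ZMod n) where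
  Adj i j := i ≠ j ∧ (i = j + 1 ∨ j = i + 1)
  symm := ⟨fun i j h => ⟨h.1.symm, h.2.symm⟩⟩
  loopless := ⟨fun i h => h.1 rfl⟩

/-- Kite: diamond (K4 minus an edge) plus a pendant vertex adjacent to a degree-3 vertex. -/
def kite : SimpleGraph (Fin 5) :=
  SimpleGraph.fromEdgeSet {s(0,1), s(0,2), s(1,2), s(1,3), s(2,3), s(1,4)}

/-- Bull: triangle with two pendant edges at distinct vertices. -/
def bull : SimpleGraph (Fin 5) :=
  SimpleGraph.fromEdgeSet {s(0,1), s(0,2), s(1,2), s(0,3), s(1,4)}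

/-- Independent expansion of the cycle `C_n`. -/
def indExp (n : ℕ) (m : ZMod n → ℕ) : SimpleGraph (Σ i : ZMod n, Fin (m i)) where
  Adj x y := x.1 ≠ y.1 ∧ (x.1 = y.1 + 1 ∨ y.1 = x.1 + 1)
  symm := ⟨fun x y h => ⟨h.1.symm, h.2.symm⟩⟩
  loopless := ⟨fun x h => h.1 rfl⟩

/-- Complete expansion of the cycle `C_n`. -/
def compExp (n : ℕ) (m : ZMod n → ℕ) : SimpleGraph (Σ i : ZMod n, Fin (m i)) where
  Adj x y := (x.1 = y.1 ∧ x ≠ y) ∨ (x.1 ≠ y.1 ∧ (x.1 = y.1 + 1 ∨ y.1 = x.1 + 1))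
  symm := by
    refine ⟨?_⟩
    rintro x y (⟨h, hne⟩ | ⟨h, h2⟩)
    · exact Or.inl ⟨h.symm, hne.symm⟩
    · exact Or.inr ⟨h.symm, h2.symm⟩
  loopless := by refine ⟨?_⟩; rintro x (⟨_, hne⟩ | ⟨h, _⟩); exacts [hne rfl, h rfl]

/-- Distance from a vertex to a set of vertices. -/
noncomputable def distToSet {V : Type*} (G : SimpleGraph V) (S : Set V) (x : V) : ℕ :=
  sInf ((fun y => G.dist x y) '' S)

private lemma gap5 (c0 c1 c2 c3 c4 r : ℕ) (h : r ≤ c0 + c1 + c2 + c3 + c4) :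
    ∃ g0 g1 g2 g3 g4 : ℕ, g0 ≤ c0 ∧ g1 ≤ c1 ∧ g2 ≤ c2 ∧ g3 ≤ c3 ∧ g4 ≤ c4 ∧
      g0 + g1 + g2 + g3 + g4 = r := by
  refine ⟨min c0 r, min c1 (r - min c0 r),
    min c2 (r - min c0 r - min c1 (r - min c0 r)),
    min c3 (r - min c0 r - min c1 (r - min c0 r) -
      min c2 (r - min c0 r - min c1 (r - min c0 r))),
    r - min c0 r - min c1 (r - min c0 r) -
      min c2 (r - min c0 r - min c1 (r - min c0 r)) -
      min c3 (r - min c0 r - min c1 (r - min c0 r) -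
        min c2 (r - min c0 r - min c1 (r - min c0 r))),
    ?_, ?_, ?_, ?_, ?_, ?_⟩ <;> omega


theorem stmt_12 (m : ZMod 5 → ℕ) (hm : ∀ i, 0 < m i) :
    (compExp 5 m).chromaticNumber =
      ((max (univ.sup fun i : ZMod 5 => m i + m (i + 1))
        (((∑ i : ZMod 5, m i) + 1) / 2) : ℕ) : ℕ∞) := by
  set n := ∑ i : ZMod 5, m i with hn
  set k := max (univ.sup fun i : ZMod 5 => m i + m (i + 1)) ((n + 1) / 2) with hk
  have hsum : n = m 0 + m 1 + m 2 + m 3 + m 4 := by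
    rw [hn]; exact Fin.sum_univ_five (f := m)
  have hsup : (univ.sup fun i : ZMod 5 => m i + m (i + 1)) ≤ k := hk ▸ le_max_left _ _
  have hc : ∀ i : ZMod 5, m i + m (i + 1) ≤ k := fun i =>
    le_trans (Finset.le_sup (f := fun i : ZMod 5 => m i + m (i + 1)) (mem_univ i)) hsup
  have hhalf : (n + 1) / 2 ≤ k := hk ▸ le_max_right _ _
  have hc0 : m 0 + m 1 ≤ k := by have := hc 0; rwa [show (0:ZMod 5)+1 = 1 from by decide] at this
  have hc1 : m 1 + m 2 ≤ k := by have := hc 1; rwa [show (1:ZMod 5)+1 = 2 from by decide] at this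
  have hc2 : m 2 + m 3 ≤ k := by have := hc 2; rwa [show (2:ZMod 5)+1 = 3 from by decide] at this
  have hc3 : m 3 + m 4 ≤ k := by have := hc 3; rwa [show (3:ZMod 5)+1 = 4 from by decide] at this
  have hc4 : m 4 + m 0 ≤ k := by have := hc 4; rwa [show (4:ZMod 5)+1 = 0 from by decide] at this
  have h2k : n ≤ 2 * k := by omega
  have hkpos : 0 < k := by have := hm 0; have := hm 1; omega
  -- gaps
  obtain ⟨g0, g1, g2, g3, g4, hg0, hg1, hg2, hg3, hg4, hgs⟩ :=
    gap5 (k - (m 0 + m 1)) (k - (m 1 + m 2)) (k - (m 2 + m 3)) (k - (m 3 + m 4))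
      (k - (m 4 + m 0)) (2 * k - n) (by omega)
  set gg : ZMod 5 → ℕ := fun i =>
    if i = 0 then g0 else if i = 1 then g1 else if i = 2 then g2 else if i = 3 then g3 else g4
    with hgg
  set S : ZMod 5 → ℕ := fun i =>
    if i = 0 then 0 else if i = 1 then m 0 + g0 else if i = 2 then m 0 + g0 + m 1 + g1
    else if i = 3 then m 0 + g0 + m 1 + g1 + m 2 + g2
    else m 0 + g0 + m 1 + g1 + m 2 + g2 + m 3 + g3 with hS
  have hcases : ∀ i : ZMod 5, i = 0 ∨ i = 1 ∨ i = 2 ∨ i = 3 ∨ i = 4 := by decide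
  have key : ∀ i : ZMod 5, (S (i + 1)) % k = (S i + (m i + gg i)) % k := by
    intro i
    rcases hcases i with h|h|h|h|h <;> subst h
    · rw [show (0:ZMod 5)+1 = 1 from by decide]
      have e1 : S 1 = m 0 + g0 := by simp only [hS]; simp +decide
      have e2 : S 0 + (m 0 + gg 0) = m 0 + g0 := by
        simp only [hS, hgg]; simp +decide; all_goals omega
      rw [e1, e2]
    · rw [show (1:ZMod 5)+1 = 2 from by decide]
      have e1 : S 2 = m 0 + g0 + m 1 + g1 := by simp only [hS]; simp +decide
      have e2 : S 1 + (m 1 + gg 1) = m 0 + g0 + m 1 + g1 := by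
        simp only [hS, hgg]; simp +decide; all_goals omega
      rw [e1, e2]
    · rw [show (2:ZMod 5)+1 = 3 from by decide]
      have e1 : S 3 = m 0 + g0 + m 1 + g1 + m 2 + g2 := by simp only [hS]; simp +decide
      have e2 : S 2 + (m 2 + gg 2) = m 0 + g0 + m 1 + g1 + m 2 + g2 := by
        simp only [hS, hgg]; simp +decide; all_goals omega
      rw [e1, e2]
    · rw [show (3:ZMod 5)+1 = 4 from by decide]
      have e1 : S 4 = m 0 + g0 + m 1 + g1 + m 2 + g2 + m 3 + g3 := by
        simp only [hS]; simp +decide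
      have e2 : S 3 + (m 3 + gg 3) = m 0 + g0 + m 1 + g1 + m 2 + g2 + m 3 + g3 := by
        simp only [hS, hgg]; simp +decide; all_goals omega
      rw [e1, e2]
    · rw [show (4:ZMod 5)+1 = 0 from by decide]
      have e1 : S 0 = 0 := by simp only [hS]; simp +decide
      have e2 : S 4 + (m 4 + gg 4) = 2 * k := by
        simp only [hS, hgg]; simp +decide; all_goals omega
      rw [e1, e2, Nat.mul_mod_left, Nat.zero_mod]
  have hcap : ∀ i : ZMod 5, m i + m (i + 1) + gg i ≤ k := by
    intro i
    rcases hcases i with h|h|h|h|h <;> subst h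
    · rw [show (0:ZMod 5)+1 = 1 from by decide]
      simp only [hgg]; simp +decide; all_goals omega
    · rw [show (1:ZMod 5)+1 = 2 from by decide]
      simp only [hgg]; simp +decide; all_goals omega
    · rw [show (2:ZMod 5)+1 = 3 from by decide]
      simp only [hgg]; simp +decide; all_goals omega
    · rw [show (3:ZMod 5)+1 = 4 from by decide]
      simp only [hgg]; simp +decide; all_goals omega
    · rw [show (4:ZMod 5)+1 = 0 from by decide]
      simp only [hgg]; simp +decide; all_goals omega
  have modne : ∀ u v : ℕ, u < v → v - u < k → u % k = v % k → False := by
    intro u v h1 h2 he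
    have hd : k ∣ v - u := (Nat.modEq_iff_dvd' h1.le).mp he
    have := Nat.le_of_dvd (by omega) hd
    omega
  -- the coloring, at the level of natural numbers
  have cross : ∀ (j : ZMod 5) (b : Fin (m j)) (a : Fin (m (j + 1))),
      (S (j + 1) + (a : ℕ)) % k ≠ (S j + (b : ℕ)) % k := by
    intro j b a heq
    have e1 : (S (j + 1) + (a : ℕ)) % k = (S j + (m j + gg j) + (a : ℕ)) % k :=
      Nat.ModEq.add_right _ (key j)
    have hu : S j + (b : ℕ) < S j + (m j + gg j) + (a : ℕ) := by have := b.isLt; omega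
    have hv : (S j + (m j + gg j) + (a : ℕ)) - (S j + (b : ℕ)) < k := by
      have := a.isLt; have := hcap j; have := b.isLt; omega
    exact modne _ _ hu hv (heq.symm.trans e1)
  have same : ∀ (j : ZMod 5) (a b : Fin (m j)), a ≠ b →
      (S j + (a : ℕ)) % k ≠ (S j + (b : ℕ)) % k := by
    intro j a b hab heq
    have hmj : m j ≤ k := by have := hc j; have := hm (j + 1); omega
    have hne : (a : ℕ) ≠ (b : ℕ) := fun h => hab (Fin.val_injective h)
    have hal := a.isLt; have hbl := b.isLt
    rcases Nat.lt_or_ge (a : ℕ) (b : ℕ) with h | h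
    · exact modne _ _ (by omega) (by omega) heq
    · exact modne _ _ (by omega) (by omega) heq.symm
  have hvalid : ∀ x y : (Σ i : ZMod 5, Fin (m i)), (compExp 5 m).Adj x y →
      (S x.1 + (x.2 : ℕ)) % k ≠ (S y.1 + (y.2 : ℕ)) % k := by
    intro x y hadj
    have hadj' : (x.1 = y.1 ∧ x ≠ y) ∨ (x.1 ≠ y.1 ∧ (x.1 = y.1 + 1 ∨ y.1 = x.1 + 1)) := hadj
    obtain ⟨i, a⟩ := x
    obtain ⟨j, b⟩ := y
    rcases hadj' with ⟨h1, hne⟩ | ⟨-, h2 | h2⟩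
    · simp only at h1; subst h1
      exact same i a b (fun h => hne (by rw [h]))
    · simp only at h2; subst h2
      exact cross j b a
    · simp only at h2; subst h2
      exact (cross i a b).symm
  let C : (compExp 5 m).Coloring (Fin k) :=
    SimpleGraph.Coloring.mk
      (fun x => ⟨(S x.1 + (x.2 : ℕ)) % k, Nat.mod_lt _ hkpos⟩)
      (fun hadj => Fin.ne_of_val_ne (hvalid _ _ hadj))
  refine le_antisymm (Colorable.chromaticNumber_le ⟨C⟩) ?_
  rw [SimpleGraph.chromaticNumber]
  simp only [le_iInf_iff]
  intro nn hnn
  obtain ⟨C'⟩ := hnn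
  rw [Nat.cast_le, hk]
  have hclq : ∀ i : ZMod 5, m i + m (i + 1) ≤ nn := by
    intro i
    have hne : ∀ j : ZMod 5, j ≠ j + 1 := by decide
    have finj : Function.Injective
        (Sum.elim (fun a : Fin (m i) => C' ⟨i, a⟩)
          (fun b : Fin (m (i + 1)) => C' ⟨i + 1, b⟩)) := by
      rintro (a|a) (b|b) h <;> simp only [Sum.elim_inl, Sum.elim_inr] at h
      · by_contra hab
        have hab' : a ≠ b := fun hh => hab (by rw [hh])
        have hadj : (compExp 5 m).Adj ⟨i, a⟩ ⟨i, b⟩ :=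
          Or.inl ⟨rfl, by simp [hab']⟩
        exact C'.valid hadj h
      · have hadj : (compExp 5 m).Adj ⟨i, a⟩ ⟨i + 1, b⟩ := Or.inr ⟨hne i, Or.inr rfl⟩
        exact (C'.valid hadj h).elim
      · have hadj : (compExp 5 m).Adj ⟨i + 1, a⟩ ⟨i, b⟩ := Or.inr ⟨(hne i).symm, Or.inl rfl⟩
        exact (C'.valid hadj h).elim
      · by_contra hab
        have hab' : a ≠ b := fun hh => hab (by rw [hh])
        have hadj : (compExp 5 m).Adj ⟨i + 1, a⟩ ⟨i + 1, b⟩ :=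
          Or.inl ⟨rfl, by simp [hab']⟩
        exact C'.valid hadj h
    have := Fintype.card_le_of_injective _ finj
    simpa using this
  have hbig : n ≤ 2 * nn := by
    have hfib : ∀ c : Fin nn,
        (univ.filter (fun x : (Σ i : ZMod 5, Fin (m i)) => C' x = c)).card ≤ 2 := by
      intro c
      by_contra hlt
      push_neg at hlt
      obtain ⟨x, y, z, hx, hy, hz, hxy, hxz, hyz⟩ := Finset.two_lt_card_iff.mp hlt
      simp only [mem_filter] at hx hy hz
      have nadj : ∀ u v : (Σ i : ZMod 5, Fin (m i)), u ≠ v → C' u = C' v →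
          u.1 ≠ v.1 ∧ ¬(u.1 = v.1 + 1) ∧ ¬(v.1 = u.1 + 1) := by
        intro u v huv hcol
        have hna : ¬ (compExp 5 m).Adj u v := fun h => C'.valid h hcol
        have hna' : ¬ ((u.1 = v.1 ∧ u ≠ v) ∨ (u.1 ≠ v.1 ∧ (u.1 = v.1 + 1 ∨ v.1 = u.1 + 1))) := hna
        push_neg at hna'
        obtain ⟨h1, h2⟩ := hna'
        have hne1 : u.1 ≠ v.1 := fun h => huv (h1 h)
        obtain ⟨p, q⟩ := h2 hne1
        exact ⟨hne1, p, q⟩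
      obtain ⟨e1, e2, e3⟩ := nadj x y hxy (hx.2.trans hy.2.symm)
      obtain ⟨f1, f2, f3⟩ := nadj x z hxz (hx.2.trans hz.2.symm)
      obtain ⟨j1, j2, j3⟩ := nadj y z hyz (hy.2.trans hz.2.symm)
      have dec5 : ∀ i j l : ZMod 5, i = j ∨ i = l ∨ j = l ∨ i = j + 1 ∨ j = i + 1 ∨
          i = l + 1 ∨ l = i + 1 ∨ j = l + 1 ∨ l = j + 1 := by decide
      rcases dec5 x.1 y.1 z.1 with h|h|h|h|h|h|h|h|h
      exacts [e1 h, f1 h, j1 h, e2 h, e3 h, f2 h, f3 h, j2 h, j3 h]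
    have hcardV : Fintype.card (Σ i : ZMod 5, Fin (m i)) = n := by
      simp [Fintype.card_sigma, hn]
    have heq1 : (univ : Finset (Σ i : ZMod 5, Fin (m i))).card =
        ∑ c : Fin nn, (univ.filter (fun x => C' x = c)).card :=
      Finset.card_eq_sum_card_fiberwise (fun x _ => mem_univ (C' x))
    have hle : (univ : Finset (Σ i : ZMod 5, Fin (m i))).card ≤ ∑ _c : Fin nn, 2 := by
      rw [heq1]; exact Finset.sum_le_sum (fun c _ => hfib c)
    have hle2 : ∑ _c : Fin nn, 2 = 2 * nn := by
      simp [Finset.sum_const, Finset.card_univ, mul_comm]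
    rw [← hcardV, ← Finset.card_univ]
    omega
  exact max_le (Finset.sup_le fun i _ => hclq i) (by omega)
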